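/- arXiv:1107.1163 — 7 statements merged into one kernel-verified Lean document; each statement's English description precedes it below -/
import Mathlib

section
/- Let A be symmetric, σ > 0 with A_σ = A + σI positive definite, and 1 ≤ k ≤ n. Then the set of maximizers of xᵀA_σx over {||x||_2 ≤ 1, ||x||_0 ≤ k} equals the set of maximizers of xᵀAx over {||x||_2 = 1, ||x||_0 ≤ k}. -/
open Finset Matrix

lemma quad_expand {n : ℕ} (A : Matrix (Fin n) (Fin n) ℝ) (σ : ℝ) (v : Fin n → ℝ) :
    v ⬝ᵥ ((A + σ • (1 : Matrix (Fin n) (Fin n) ℝ)) *ᵥ v)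
      = v ⬝ᵥ (A *ᵥ v) + σ * ∑ i, (v i) ^ 2 := by
  have h1 : (σ • (1 : Matrix (Fin n) (Fin n) ℝ)) *ᵥ v = σ • v := by
    simp [Matrix.smul_mulVec]
  rw [Matrix.add_mulVec, dotProduct_add, h1, dotProduct_smul, smul_eq_mul]
  congr 1
  simp [dotProduct, sq]

lemma quad_smul {n : ℕ} (M : Matrix (Fin n) (Fin n) ℝ) (c : ℝ) (v : Fin n → ℝ) :
    (c • v) ⬝ᵥ (M *ᵥ (c • v)) = c ^ 2 * (v ⬝ᵥ (M *ᵥ v)) := by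
  simp [Matrix.mulVec_smul, smul_dotProduct, dotProduct_smul, smul_eq_mul, sq]
  ring

lemma pd_pos {n : ℕ} {M : Matrix (Fin n) (Fin n) ℝ} (hM : M.PosDef) {x : Fin n → ℝ}
    (hx : x ≠ 0) : 0 < x ⬝ᵥ (M *ᵥ x) := by
  simpa using hM.re_dotProduct_pos hx

theorem argmax_regularized_eq_argmax (n : ℕ) (A : Matrix (Fin n) (Fin n) ℝ)
    (hA : A.IsSymm) (σ : ℝ) (hσ : 0 < σ)
    (hpd : (A + σ • (1 : Matrix (Fin n) (Fin n) ℝ)).PosDef)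
    (k : ℕ) (hk1 : 1 ≤ k) (hkn : k ≤ n) :
    {x : Fin n → ℝ |
        Real.sqrt (∑ i, (x i) ^ 2) ≤ 1 ∧
        (Finset.univ.filter (fun i => x i ≠ 0)).card ≤ k ∧
        ∀ y : Fin n → ℝ,
          Real.sqrt (∑ i, (y i) ^ 2) ≤ 1 →
          (Finset.univ.filter (fun i => y i ≠ 0)).card ≤ k →
          y ⬝ᵥ ((A + σ • (1 : Matrix (Fin n) (Fin n) ℝ)) *ᵥ y) ≤
            x ⬝ᵥ ((A + σ • (1 : Matrix (Fin n) (Fin n) ℝ)) *ᵥ x)} =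
      {x : Fin n → ℝ |
        Real.sqrt (∑ i, (x i) ^ 2) = 1 ∧
        (Finset.univ.filter (fun i => x i ≠ 0)).card ≤ k ∧
        ∀ y : Fin n → ℝ,
          Real.sqrt (∑ i, (y i) ^ 2) = 1 →
          (Finset.univ.filter (fun i => y i ≠ 0)).card ≤ k →
          y ⬝ᵥ (A *ᵥ y) ≤ x ⬝ᵥ (A *ᵥ x)} := by
  have hn : 0 < n := lt_of_lt_of_le hk1 hkn
  set Aσ := A + σ • (1 : Matrix (Fin n) (Fin n) ℝ) with hAσ
  -- nonnegativity of sums of squares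
  have hsq : ∀ v : Fin n → ℝ, (0:ℝ) ≤ ∑ i, (v i) ^ 2 := fun v =>
    Finset.sum_nonneg fun i _ => sq_nonneg _
  -- sum of squares = 0 iff v = 0
  have hsum_pos : ∀ v : Fin n → ℝ, v ≠ 0 → 0 < ∑ i, (v i) ^ 2 := by
    intro v hv
    rcases lt_or_eq_of_le (hsq v) with h | h
    · exact h
    · exfalso; apply hv; funext i
      have := (Finset.sum_eq_zero_iff_of_nonneg (fun i _ => sq_nonneg (v i))).mp h.symm i
        (Finset.mem_univ i)
      exact pow_eq_zero_iff (by norm_num) |>.mp this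
  -- support under scaling
  have hsupp : ∀ (c : ℝ) (v : Fin n → ℝ), c ≠ 0 →
      (Finset.univ.filter (fun i => (c • v) i ≠ 0)) =
        (Finset.univ.filter (fun i => v i ≠ 0)) := by
    intro c v hc
    apply Finset.filter_congr
    intro i _
    simp [Pi.smul_apply, smul_eq_mul, hc]
  -- the standard basis vector e₀
  set e : Fin n → ℝ := fun i => if i = ⟨0, hn⟩ then 1 else 0 with he
  have he_sum : ∑ i, (e i) ^ 2 = 1 := by
    simp [he]
  have he_supp : (Finset.univ.filter (fun i => e i ≠ 0)).card ≤ k := by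
    have : (Finset.univ.filter (fun i => e i ≠ 0)) = {⟨0, hn⟩} := by
      ext i; by_cases h : i = ⟨0, hn⟩ <;> simp [he, h]
    rw [this]; simpa using hk1
  have he_ne : e ≠ 0 := by
    intro h
    have : e ⟨0, hn⟩ = 0 := by rw [h]; rfl
    simp [he] at this
  ext x
  simp only [Set.mem_setOf_eq]
  constructor
  · rintro ⟨hx1, hx2, hmax⟩
    have hxS : ∑ i, (x i) ^ 2 ≤ 1 := by simpa using hx1
    -- x ≠ 0 since q(x) ≥ q(e) > 0
    have hqe : 0 < e ⬝ᵥ (Aσ *ᵥ e) := pd_pos hpd he_ne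
    have hqx : 0 < x ⬝ᵥ (Aσ *ᵥ x) :=
      lt_of_lt_of_le hqe (hmax e (by rw [he_sum]; simp) he_supp)
    have hxne : x ≠ 0 := by
      intro h; rw [h] at hqx; simp at hqx
    have hSpos : 0 < ∑ i, (x i) ^ 2 := hsum_pos x hxne
    -- show ‖x‖ = 1
    have hS1 : ∑ i, (x i) ^ 2 = 1 := by
      by_contra hne
      have hSlt : ∑ i, (x i) ^ 2 < 1 := lt_of_le_of_ne hxS hne
      set c : ℝ := (Real.sqrt (∑ i, (x i) ^ 2))⁻¹ with hc
      have hsp : 0 < Real.sqrt (∑ i, (x i) ^ 2) := Real.sqrt_pos.mpr hSpos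
      have hcpos : 0 < c := inv_pos.mpr hsp
      have hc2 : c ^ 2 = (∑ i, (x i) ^ 2)⁻¹ := by
        rw [hc, ← Real.sqrt_inv]
        exact Real.sq_sqrt (inv_nonneg.mpr (hsq x))
      have hz_sum : ∑ i, ((c • x) i) ^ 2 = 1 := by
        have : ∑ i, ((c • x) i) ^ 2 = c ^ 2 * ∑ i, (x i) ^ 2 := by
          simp [Pi.smul_apply, smul_eq_mul, mul_pow, Finset.mul_sum]
        rw [this, hc2, inv_mul_cancel₀ (ne_of_gt hSpos)]
      have hle := hmax (c • x) (by rw [hz_sum]; simp) (by rw [hsupp c x (ne_of_gt hcpos)]; exact hx2)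
      rw [quad_smul, hc2] at hle
      have hgt : x ⬝ᵥ (Aσ *ᵥ x) < (∑ i, (x i) ^ 2)⁻¹ * (x ⬝ᵥ (Aσ *ᵥ x)) := by
        have h1 : 1 < (∑ i, (x i) ^ 2)⁻¹ := (one_lt_inv₀ hSpos).mpr hSlt
        nlinarith
      linarith
    refine ⟨Real.sqrt_eq_one.mpr hS1, hx2, ?_⟩
    intro y hy1 hy2
    have hyS : ∑ i, (y i) ^ 2 = 1 := Real.sqrt_eq_one.mp hy1
    have := hmax y (le_of_eq hy1) hy2
    rw [quad_expand, quad_expand, hS1, hyS] at this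
    linarith
  · rintro ⟨hx1, hx2, hmax⟩
    have hS1 : ∑ i, (x i) ^ 2 = 1 := Real.sqrt_eq_one.mp hx1
    have hxne : x ≠ 0 := by
      intro h; rw [h] at hS1; simp at hS1
    refine ⟨le_of_eq hx1, hx2, ?_⟩
    intro y hy1 hy2
    have hyS : ∑ i, (y i) ^ 2 ≤ 1 := by simpa using hy1
    have hqx : x ⬝ᵥ (Aσ *ᵥ x) = x ⬝ᵥ (A *ᵥ x) + σ := by
      rw [quad_expand, hS1, mul_one]
    by_cases hy : y = 0
    · have h0 : y ⬝ᵥ (Aσ *ᵥ y) = 0 := by rw [hy]; simp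
      rw [h0]
      exact (pd_pos hpd hxne).le
    · have hSy : 0 < ∑ i, (y i) ^ 2 := hsum_pos y hy
      set c : ℝ := (Real.sqrt (∑ i, (y i) ^ 2))⁻¹ with hc
      have hsp : 0 < Real.sqrt (∑ i, (y i) ^ 2) := Real.sqrt_pos.mpr hSy
      have hcpos : 0 < c := inv_pos.mpr hsp
      have hc2 : c ^ 2 = (∑ i, (y i) ^ 2)⁻¹ := by
        rw [hc, ← Real.sqrt_inv]
        exact Real.sq_sqrt (inv_nonneg.mpr (hsq y))
      have hz_sum : ∑ i, ((c • y) i) ^ 2 = 1 := by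
        have : ∑ i, ((c • y) i) ^ 2 = c ^ 2 * ∑ i, (y i) ^ 2 := by
          simp [Pi.smul_apply, smul_eq_mul, mul_pow, Finset.mul_sum]
        rw [this, hc2, inv_mul_cancel₀ (ne_of_gt hSy)]
      have hz_ne : (c • y) ≠ 0 := fun h => hy (by
        have := smul_smul c⁻¹ c y
        rw [inv_mul_cancel₀ (ne_of_gt hcpos), one_smul] at this
        rw [← this, h, smul_zero])
      have hzA := hmax (c • y) (Real.sqrt_eq_one.mpr hz_sum)
        (by rw [hsupp c y (ne_of_gt hcpos)]; exact hy2)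
      -- 0 < (c•y)ᵀAσ(c•y) = (c•y)ᵀA(c•y) + σ
      have hzpos : 0 < (c • y) ⬝ᵥ (A *ᵥ (c • y)) + σ := by
        have := pd_pos hpd hz_ne
        rw [hAσ, quad_expand, hz_sum, mul_one] at this
        exact this
      -- yᵀAσy = S * ((c•y)ᵀA(c•y) + σ) ≤ (c•y)ᵀA(c•y) + σ ≤ xᵀAx + σ
      have key : y ⬝ᵥ (Aσ *ᵥ y) = (∑ i, (y i) ^ 2) * ((c • y) ⬝ᵥ (A *ᵥ (c • y)) + σ) := by
        rw [quad_expand, quad_smul, hc2]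
        field_simp
      rw [key, hqx]
      calc (∑ i, (y i) ^ 2) * ((c • y) ⬝ᵥ (A *ᵥ (c • y)) + σ)
          ≤ 1 * ((c • y) ⬝ᵥ (A *ᵥ (c • y)) + σ) :=
            mul_le_mul_of_nonneg_right hyS (le_of_lt hzpos)
        _ = (c • y) ⬝ᵥ (A *ᵥ (c • y)) + σ := one_mul _
        _ ≤ x ⬝ᵥ (A *ᵥ x) + σ := by linarith
end

section
/- Let F : R^n → R be convex and C ⊆ R^n nonempty compact. Let {x^j} be generated by x^{j+1} ∈ argmax{⟨x − x^j, F'(x^j)⟩ : x ∈ C} with x^0 ∈ C. Then the sequence F(x^j) is monotonically nondecreasing and γ(x^j) = max{⟨v − x^j, F'(x^j)⟩ : v ∈ C} converges to 0 as j → ∞. -/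
open scoped RealInnerProductSpace
open Filter

theorem congradu_monotone_and_gamma_tendsto_zero (n : ℕ)
    (F : EuclideanSpace ℝ (Fin n) → ℝ) (hF : ConvexOn ℝ Set.univ F)
    (G : EuclideanSpace ℝ (Fin n) → EuclideanSpace ℝ (Fin n))
    (hG : ∀ x v, ⟪v - x, G x⟫ ≤ F v - F x)
    (C : Set (EuclideanSpace ℝ (Fin n))) (hCne : C.Nonempty) (hC : IsCompact C)
    (x : ℕ → EuclideanSpace ℝ (Fin n)) (hx0 : x 0 ∈ C)
    (hstep : ∀ j, x (j + 1) ∈ C ∧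
      ∀ v ∈ C, ⟪v - x j, G (x j)⟫ ≤ ⟪x (j + 1) - x j, G (x j)⟫)
    (γ : ℕ → ℝ)
    (hγ : ∀ j, IsGreatest {t : ℝ | ∃ v ∈ C, t = ⟪v - x j, G (x j)⟫} (γ j)) :
    Monotone (fun j => F (x j)) ∧ Tendsto γ atTop (nhds 0) := by
  have hxC : ∀ j, x j ∈ C := by
    intro j
    induction j with
    | zero => exact hx0
    | succ k ih => exact (hstep k).1
  -- γ j ≥ 0
  have hγ0 : ∀ j, 0 ≤ γ j := by
    intro j
    have : (0 : ℝ) ∈ {t : ℝ | ∃ v ∈ C, t = ⟪v - x j, G (x j)⟫} := by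
      exact ⟨x j, hxC j, by simp⟩
    exact (hγ j).2 this
  -- γ j ≤ F (x (j+1)) - F (x j)
  have hγle : ∀ j, γ j ≤ F (x (j + 1)) - F (x j) := by
    intro j
    obtain ⟨v, hv, hveq⟩ := (hγ j).1
    calc γ j = ⟪v - x j, G (x j)⟫ := hveq
      _ ≤ ⟪x (j + 1) - x j, G (x j)⟫ := (hstep j).2 v hv
      _ ≤ F (x (j + 1)) - F (x j) := hG _ _
  have hmono : Monotone (fun j => F (x j)) := by
    apply monotone_nat_of_le_succ
    intro j
    have := (hγ0 j).trans (hγle j)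
    linarith
  refine ⟨hmono, ?_⟩
  -- F continuous, bounded on C
  have hcont : Continuous F := by
    exact continuousOn_univ.mp (hF.continuousOn isOpen_univ)
  obtain ⟨M, hM⟩ := (hC.image hcont).bddAbove
  have hbdd : BddAbove (Set.range fun j => F (x j)) := by
    refine ⟨M, ?_⟩
    rintro t ⟨j, rfl⟩
    exact hM ⟨x j, hxC j, rfl⟩
  have hlim : Tendsto (fun j => F (x j)) atTop (nhds (⨆ j, F (x j))) :=
    tendsto_atTop_ciSup hmono hbdd
  have hlim' : Tendsto (fun j => F (x (j + 1))) atTop (nhds (⨆ j, F (x j))) :=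
    hlim.comp (tendsto_add_atTop_nat 1)
  have hdiff : Tendsto (fun j => F (x (j + 1)) - F (x j)) atTop (nhds 0) := by
    have := hlim'.sub hlim
    simpa using this
  exact tendsto_of_tendsto_of_tendsto_of_le_of_le tendsto_const_nhds hdiff
    hγ0 hγle
end

section
/- Let F : R^n → R be convex and continuously differentiable, C ⊆ R^n nonempty compact, and {x^j} the ConGradU sequence x^{j+1} ∈ argmax{⟨x − x^j, ∇F(x^j)⟩ : x ∈ C}. Then every limit point x^∞ of {x^j} is a stationary point, i.e., ⟨v − x^∞, ∇F(x^∞)⟩ ≤ 0 for all v ∈ C. -/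
open scoped RealInnerProductSpace
open Filter Topology

lemma inner_gradient_apply {E : Type*} [NormedAddCommGroup E] [InnerProductSpace ℝ E]
    [CompleteSpace E] (F : E → ℝ) (a v : E) :
    ⟪gradient F a, v⟫ = fderiv ℝ F a v := by
  rw [gradient]
  rw [← InnerProductSpace.toDual_apply_apply, LinearIsometryEquiv.apply_symm_apply]

lemma grad_first_order {E : Type*} [NormedAddCommGroup E] [InnerProductSpace ℝ E]
    [CompleteSpace E] {F : E → ℝ} (hF : ConvexOn ℝ Set.univ F) (hF1 : ContDiff ℝ 1 F)
    (a b : E) : F a + ⟪b - a, gradient F a⟫ ≤ F b := by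
  set g : ℝ → ℝ := fun t => F (a + t • (b - a)) with hg
  have hgconv : ConvexOn ℝ Set.univ g := by
    have h2 : g = F ∘ (AffineMap.lineMap a b) := by
      funext t
      simp only [hg, Function.comp_apply, AffineMap.lineMap_apply]
      rw [add_comm]
      rfl
    rw [h2]
    simpa using hF.comp_affineMap (AffineMap.lineMap a b)
  have hline : ∀ t : ℝ, HasDerivAt (fun t : ℝ => a + t • (b - a)) (b - a) t := by
    intro t
    simpa using ((hasDerivAt_id t).smul_const (b - a)).const_add a
  have hdiffF : DifferentiableAt ℝ F (a + (0 : ℝ) • (b - a)) :=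
    (hF1.differentiable one_ne_zero) _
  have hgd : HasDerivAt g (fderiv ℝ F a (b - a)) 0 := by
    have := hdiffF.hasFDerivAt.comp_hasDerivAt 0 (hline 0)
    simp only [zero_smul, add_zero] at this
    exact this
  have hslope := hgconv.le_slope_of_hasDerivAt (Set.mem_univ (0 : ℝ))
    (Set.mem_univ (1 : ℝ)) one_pos hgd
  have hs : slope g 0 1 = F b - F a := by
    simp [slope_def_field, hg]
  rw [hs] at hslope
  have hfd : fderiv ℝ F a (b - a) = ⟪b - a, gradient F a⟫ := by
    rw [real_inner_comm, inner_gradient_apply]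
  linarith [hslope, hfd ▸ hslope]

theorem congradu_limit_points_stationary (n : ℕ)
    (F : EuclideanSpace ℝ (Fin n) → ℝ) (hF : ConvexOn ℝ Set.univ F)
    (hF1 : ContDiff ℝ 1 F)
    (C : Set (EuclideanSpace ℝ (Fin n))) (hCne : C.Nonempty) (hC : IsCompact C)
    (x : ℕ → EuclideanSpace ℝ (Fin n)) (hx0 : x 0 ∈ C)
    (hstep : ∀ j, x (j + 1) ∈ C ∧
      ∀ v ∈ C, ⟪v - x j, gradient F (x j)⟫ ≤ ⟪x (j + 1) - x j, gradient F (x j)⟫) :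
    ∀ xlim : EuclideanSpace ℝ (Fin n), MapClusterPt xlim atTop x →
      ∀ v ∈ C, ⟪v - xlim, gradient F xlim⟫ ≤ 0 := by
  have hmemC : ∀ j, x j ∈ C := by
    intro j
    induction j with
    | zero => exact hx0
    | succ k ih => exact (hstep k).1
  set gap : ℕ → ℝ := fun j => ⟪x (j + 1) - x j, gradient F (x j)⟫ with hgap
  have hgap_nonneg : ∀ j, 0 ≤ gap j := by
    intro j
    have := (hstep j).2 (x j) (hmemC j)
    rw [sub_self, inner_zero_left] at this
    exact this
  have hmono : Monotone (fun j => F (x j)) := by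
    apply monotone_nat_of_le_succ
    intro j
    have h1 := grad_first_order hF hF1 (x j) (x (j + 1))
    have := hgap_nonneg j
    simp only [hgap] at this
    linarith
  -- F ∘ x is bounded above
  obtain ⟨z, _, hz⟩ := hC.exists_isMaxOn hCne (hF1.continuous.continuousOn)
  have hbdd : BddAbove (Set.range fun j => F (x j)) := by
    refine ⟨F z, ?_⟩
    rintro _ ⟨j, rfl⟩
    exact hz (hmemC j)
  have htend : Tendsto (fun j => F (x j)) atTop (𝓝 (⨆ j, F (x j))) :=
    tendsto_atTop_ciSup hmono hbdd
  have hdiff0 : Tendsto (fun j => F (x (j + 1)) - F (x j)) atTop (𝓝 0) := by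
    have h1 : Tendsto (fun j => F (x (j + 1))) atTop (𝓝 (⨆ j, F (x j))) :=
      htend.comp (tendsto_add_atTop_nat 1)
    simpa using h1.sub htend
  have hgap0 : Tendsto gap atTop (𝓝 0) := by
    apply squeeze_zero hgap_nonneg _ hdiff0
    intro j
    have h1 := grad_first_order hF hF1 (x j) (x (j + 1))
    simp only [hgap]
    linarith
  intro xlim hcl v hv
  -- gradient is continuous
  have hgradcont : Continuous (gradient F) := by
    have h1 : Continuous (fderiv ℝ F) := hF1.continuous_fderiv one_ne_zero
    have : gradient F = fun y =>
        (InnerProductSpace.toDual ℝ (EuclideanSpace ℝ (Fin n))).symm (fderiv ℝ F y) := rfl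
    rw [this]
    exact (InnerProductSpace.toDual ℝ (EuclideanSpace ℝ (Fin n))).symm.continuous.comp h1
  set g : EuclideanSpace ℝ (Fin n) → ℝ := fun y => ⟪v - y, gradient F y⟫ with hgdef
  have hgcont : Continuous g :=
    (continuous_const.sub continuous_id).inner hgradcont
  have hclg : MapClusterPt (g xlim) atTop (g ∘ x) :=
    hcl.continuousAt_comp hgcont.continuousAt
  have hle : ∀ j, g (x j) ≤ gap j := fun j => (hstep j).2 v hv
  -- conclude g xlim ≤ 0
  by_contra hpos
  push_neg at hpos
  set ε := g xlim / 2 with hε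
  have hεpos : 0 < ε := by positivity
  have hball : Metric.ball (g xlim) ε ∈ 𝓝 (g xlim) := Metric.ball_mem_nhds _ hεpos
  have hfreq : ∃ᶠ j in atTop, (g ∘ x) j ∈ Metric.ball (g xlim) ε :=
    mapClusterPt_iff_frequently.mp hclg _ hball
  have hev : ∀ᶠ j in atTop, gap j < ε :=
    hgap0.eventually (eventually_lt_nhds hεpos)
  obtain ⟨j, hj1, hj2⟩ := (hfreq.and_eventually hev).exists
  have h1 : |g (x j) - g xlim| < ε := by
    simpa [Real.dist_eq, Function.comp] using hj1
  have h2 := hle j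
  have h3 : g xlim - ε < g (x j) := by
    have := abs_lt.mp h1
    linarith [this.1]
  linarith [hεpos]
end

section
/- Given nonzero a ∈ R^n and 1 ≤ k ≤ n, max{⟨a,x⟩² : ||x||_2 = 1, ||x||_0 ≤ k} = ||T_k(a)||_2², attained at x* = T_k(a)/||T_k(a)||_2. -/
open Finset

/-- Maximizing a squared linear function over the sphere intersected with an `l0` constraint:
`T` is any best `k`-sparse approximation of `a`. -/
theorem max_squared_linear_over_sphere_l0 (n : ℕ) (a : Fin n → ℝ) (ha : a ≠ 0)
    (k : ℕ) (hk1 : 1 ≤ k) (hkn : k ≤ n)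
    (T : Fin n → ℝ)
    (hT0 : (Finset.univ.filter (fun i => T i ≠ 0)).card ≤ k)
    (hTmin : ∀ x : Fin n → ℝ, (Finset.univ.filter (fun i => x i ≠ 0)).card ≤ k →
      ∑ i, (T i - a i) ^ 2 ≤ ∑ i, (x i - a i) ^ 2) :
    IsGreatest {y : ℝ | ∃ x : Fin n → ℝ,
        Real.sqrt (∑ i, (x i) ^ 2) = 1 ∧
        (Finset.univ.filter (fun i => x i ≠ 0)).card ≤ k ∧
        y = (∑ i, a i * x i) ^ 2}
      ((Real.sqrt (∑ i, (T i) ^ 2)) ^ 2) ∧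
    Real.sqrt (∑ i, (T i / Real.sqrt (∑ j, (T j) ^ 2)) ^ 2) = 1 ∧
    (Finset.univ.filter (fun i => T i / Real.sqrt (∑ j, (T j) ^ 2) ≠ 0)).card ≤ k ∧
    (∑ i, a i * (T i / Real.sqrt (∑ j, (T j) ^ 2))) ^ 2 =
      (Real.sqrt (∑ i, (T i) ^ 2)) ^ 2 := by
  classical
  -- Step 1: T agrees with a on its support
  have hTa : ∀ i, T i ≠ 0 → T i = a i := by
    have hx : ∀ j, (fun j => if T j = 0 then 0 else a j) j ≠ 0 → T j ≠ 0 := by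
      intro j hj h0
      simp [h0] at hj
    set x : Fin n → ℝ := fun j => if T j = 0 then 0 else a j with hxdef
    have hsub : univ.filter (fun j => x j ≠ 0) ⊆ univ.filter (fun j => T j ≠ 0) := by
      intro j hj
      simp only [mem_filter] at hj ⊢
      exact ⟨mem_univ j, hx j hj.2⟩
    have hcard : (univ.filter (fun j => x j ≠ 0)).card ≤ k :=
      le_trans (Finset.card_le_card hsub) hT0
    have hle := hTmin x hcard
    have hsplit : ∀ f : Fin n → ℝ, ∑ j, f j =
        ∑ j ∈ univ.filter (fun j => T j ≠ 0), f j +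
        ∑ j ∈ univ.filter (fun j => ¬ T j ≠ 0), f j :=
      fun f => (Finset.sum_filter_add_sum_filter_not univ _ f).symm
    rw [hsplit (fun j => (T j - a j) ^ 2), hsplit (fun j => (x j - a j) ^ 2)] at hle
    have e1 : ∑ j ∈ univ.filter (fun j => ¬ T j ≠ 0), (T j - a j) ^ 2
        = ∑ j ∈ univ.filter (fun j => ¬ T j ≠ 0), (x j - a j) ^ 2 := by
      apply Finset.sum_congr rfl
      intro j hj
      simp only [mem_filter, not_not] at hj
      simp [hxdef, hj.2]
    have e2 : ∑ j ∈ univ.filter (fun j => T j ≠ 0), (x j - a j) ^ 2 = 0 := by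
      apply Finset.sum_eq_zero
      intro j hj
      simp only [mem_filter] at hj
      simp [hxdef, hj.2]
    rw [e1, e2] at hle
    have h0 : ∑ j ∈ univ.filter (fun j => T j ≠ 0), (T j - a j) ^ 2 ≤ 0 := by linarith
    have hz := (Finset.sum_eq_zero_iff_of_nonneg (fun j _ => sq_nonneg _)).mp
      (le_antisymm h0 (Finset.sum_nonneg fun j _ => sq_nonneg _))
    intro i hi
    have := hz i (by simp [hi])
    have h := pow_eq_zero_iff (n := 2) (by norm_num) |>.mp this
    linarith [sub_eq_zero.mp h]
  have hTsq : ∀ i, T i ^ 2 = a i * T i := by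
    intro i
    by_cases h : T i = 0
    · simp [h]
    · rw [hTa i h]; ring
  have hdiff : ∀ i, (T i - a i) ^ 2 = a i ^ 2 - T i ^ 2 := by
    intro i
    have h := hTsq i
    nlinarith [h]
  have hsumdiff : ∑ i, (T i - a i) ^ 2 = ∑ i, a i ^ 2 - ∑ i, T i ^ 2 := by
    rw [← Finset.sum_sub_distrib]
    exact Finset.sum_congr rfl fun i _ => hdiff i
  -- general bound: for k-sparse x, sum of a² over supp x ≤ ∑ T²
  have hbound : ∀ x : Fin n → ℝ, (univ.filter (fun i => x i ≠ 0)).card ≤ k →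
      ∑ i ∈ univ.filter (fun i => x i ≠ 0), a i ^ 2 ≤ ∑ i, T i ^ 2 := by
    intro x hxc
    set x' : Fin n → ℝ := fun j => if x j = 0 then 0 else a j with hx'def
    have hsub : univ.filter (fun j => x' j ≠ 0) ⊆ univ.filter (fun j => x j ≠ 0) := by
      intro j hj
      simp only [mem_filter] at hj ⊢
      refine ⟨mem_univ j, fun h0 => hj.2 ?_⟩
      simp [hx'def, h0]
    have hle := hTmin x' (le_trans (Finset.card_le_card hsub) hxc)
    have hsplit : ∀ f : Fin n → ℝ, ∑ j, f j =
        ∑ j ∈ univ.filter (fun j => x j ≠ 0), f j +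
        ∑ j ∈ univ.filter (fun j => ¬ x j ≠ 0), f j :=
      fun f => (Finset.sum_filter_add_sum_filter_not univ _ f).symm
    rw [hsplit (fun j => (x' j - a j) ^ 2)] at hle
    have e1 : ∑ j ∈ univ.filter (fun j => x j ≠ 0), (x' j - a j) ^ 2 = 0 := by
      apply Finset.sum_eq_zero
      intro j hj
      simp only [mem_filter] at hj
      simp [hx'def, hj.2]
    have e2 : ∑ j ∈ univ.filter (fun j => ¬ x j ≠ 0), (x' j - a j) ^ 2
        = ∑ j ∈ univ.filter (fun j => ¬ x j ≠ 0), a j ^ 2 := by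
      apply Finset.sum_congr rfl
      intro j hj
      simp only [mem_filter, not_not] at hj
      simp [hx'def, hj.2]
    have e3 : ∑ j, a j ^ 2 =
        ∑ j ∈ univ.filter (fun j => x j ≠ 0), a j ^ 2 +
        ∑ j ∈ univ.filter (fun j => ¬ x j ≠ 0), a j ^ 2 :=
      (Finset.sum_filter_add_sum_filter_not univ _ _).symm
    rw [e1, e2, hsumdiff] at hle
    linarith
  -- positivity of ∑ T²
  have hTpos : 0 < ∑ i, T i ^ 2 := by
    obtain ⟨i0, hi0⟩ := Function.ne_iff.mp ha
    simp only [Pi.zero_apply] at hi0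
    set x : Fin n → ℝ := fun j => if j = i0 then a i0 else 0 with hxdef
    have hsub : univ.filter (fun j => x j ≠ 0) ⊆ {i0} := by
      intro j hj
      simp only [mem_filter, hxdef] at hj
      rcases eq_or_ne j i0 with h | h
      · simp [h]
      · simp [h] at hj
    have hxc : (univ.filter (fun j => x j ≠ 0)).card ≤ k :=
      le_trans (le_trans (Finset.card_le_card hsub) (by simp)) hk1
    have hb := hbound x hxc
    have hmem : i0 ∈ univ.filter (fun j => x j ≠ 0) := by
      simp [hxdef, hi0]
    have h1 : a i0 ^ 2 ≤ ∑ i ∈ univ.filter (fun j => x j ≠ 0), a i ^ 2 :=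
      Finset.single_le_sum (f := fun i => a i ^ 2) (fun i _ => sq_nonneg _) hmem
    have : 0 < a i0 ^ 2 := by positivity
    linarith
  set c := Real.sqrt (∑ j, T j ^ 2) with hcdef
  have hc2 : c ^ 2 = ∑ j, T j ^ 2 := Real.sq_sqrt (le_of_lt hTpos)
  have hcpos : 0 < c := Real.sqrt_pos.mpr hTpos
  have hcne : c ≠ 0 := ne_of_gt hcpos
  -- sum a i * T i = ∑ T²
  have haT : ∑ i, a i * T i = ∑ i, T i ^ 2 :=
    (Finset.sum_congr rfl fun i _ => hTsq i).symm
  refine ⟨⟨⟨fun i => T i / c, ?_, ?_, ?_⟩, ?_⟩, ?_, ?_, ?_⟩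
  · -- unit norm
    have : ∑ i, (T i / c) ^ 2 = 1 := by
      simp_rw [div_pow, ← Finset.sum_div]
      rw [← hc2]
      field_simp
    rw [this, Real.sqrt_one]
  · -- sparsity
    have : univ.filter (fun i => T i / c ≠ 0) = univ.filter (fun i => T i ≠ 0) := by
      apply Finset.filter_congr
      intro i _
      simp only [ne_eq, div_eq_zero_iff, hcne, or_false]
    rw [this]; exact hT0
  · -- value
    have : ∑ i, a i * (T i / c) = c := by
      simp_rw [← mul_div_assoc, ← Finset.sum_div]
      rw [haT, ← hc2]
      field_simp
    rw [this]
  · -- upper bound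
    rintro y ⟨x, hx1, hxc, rfl⟩
    have hxsum : ∑ i, x i ^ 2 = 1 := by
      have h0 : 0 ≤ ∑ i, x i ^ 2 := Finset.sum_nonneg fun i _ => sq_nonneg _
      nlinarith [Real.sq_sqrt h0, hx1]
    have hfe : ∑ i ∈ univ.filter (fun i => x i ≠ 0), a i * x i = ∑ i, a i * x i := by
      apply Finset.sum_filter_of_ne
      intro i _ hne h0
      exact hne (by simp [h0])
    have hcs := Finset.sum_mul_sq_le_sq_mul_sq (univ.filter (fun i => x i ≠ 0)) a x
    have hxle : ∑ i ∈ univ.filter (fun i => x i ≠ 0), x i ^ 2 ≤ 1 := by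
      rw [← hxsum]
      exact Finset.sum_le_sum_of_subset_of_nonneg (Finset.filter_subset _ _)
        (fun i _ _ => sq_nonneg _)
    have ha2 : 0 ≤ ∑ i ∈ univ.filter (fun i => x i ≠ 0), a i ^ 2 :=
      Finset.sum_nonneg fun i _ => sq_nonneg _
    have hb := hbound x hxc
    calc (∑ i, a i * x i) ^ 2 = (∑ i ∈ univ.filter (fun i => x i ≠ 0), a i * x i) ^ 2 := by
          rw [hfe]
      _ ≤ (∑ i ∈ univ.filter (fun i => x i ≠ 0), a i ^ 2) *
            ∑ i ∈ univ.filter (fun i => x i ≠ 0), x i ^ 2 := hcs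
      _ ≤ (∑ i ∈ univ.filter (fun i => x i ≠ 0), a i ^ 2) * 1 :=
          mul_le_mul_of_nonneg_left hxle ha2
      _ = ∑ i ∈ univ.filter (fun i => x i ≠ 0), a i ^ 2 := mul_one _
      _ ≤ ∑ i, T i ^ 2 := hb
      _ = c ^ 2 := hc2.symm
  · have : ∑ i, (T i / c) ^ 2 = 1 := by
      simp_rw [div_pow, ← Finset.sum_div]
      rw [← hc2]
      field_simp
    rw [this, Real.sqrt_one]
  · have : univ.filter (fun i => T i / c ≠ 0) = univ.filter (fun i => T i ≠ 0) := by
      apply Finset.filter_congr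
      intro i _
      simp only [ne_eq, div_eq_zero_iff, hcne, or_false]
    rw [this]; exact hT0
  · have : ∑ i, a i * (T i / c) = c := by
      simp_rw [← mul_div_assoc, ← Finset.sum_div]
      rw [haT, ← hc2]
      field_simp
    rw [this]
end

section
/- Given a ∈ R^n and s > 0, max{⟨a,x⟩² − s||x||_0 : ||x||_2 = 1} = Σ_{i=1}^n (a_i² − s)_+, and (assuming some a_i² > s) a maximizer is x*_i = a_i[sgn(a_i² − s)]_+ / sqrt(Σ_j a_j²[sgn(a_j² − s)]_+). -/
open Finset

/-- The `l0`-penalized squared-linear maximization over the unit sphere has the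
closed-form optimal value `∑ (aᵢ² - s)₊`, attained at the stated thresholded vector. -/
theorem max_squared_linear_l0_penalized (n : ℕ) (a : Fin n → ℝ) (s : ℝ) (hs : 0 < s)
    (hex : ∃ i, s < (a i) ^ 2) :
    IsGreatest {y : ℝ | ∃ x : Fin n → ℝ,
        Real.sqrt (∑ i, (x i) ^ 2) = 1 ∧
        y = (∑ i, a i * x i) ^ 2 -
          s * ((Finset.univ.filter (fun i => x i ≠ 0)).card : ℝ)}
      (∑ i, max ((a i) ^ 2 - s) 0) ∧
    (letI xstar : Fin n → ℝ := fun i =>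
        a i * max (Real.sign ((a i) ^ 2 - s)) 0 /
          Real.sqrt (∑ j, (a j) ^ 2 * max (Real.sign ((a j) ^ 2 - s)) 0)
     Real.sqrt (∑ i, (xstar i) ^ 2) = 1 ∧
       (∑ i, a i * xstar i) ^ 2 -
          s * ((Finset.univ.filter (fun i => xstar i ≠ 0)).card : ℝ) =
         ∑ i, max ((a i) ^ 2 - s) 0) := by
  classical
  have hmax : ∀ i, max (Real.sign ((a i) ^ 2 - s)) 0 = if s < (a i) ^ 2 then 1 else 0 := by
    intro i
    rcases lt_trichotomy ((a i) ^ 2 - s) 0 with h | h | h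
    · rw [Real.sign_of_neg h, if_neg (by linarith)]
      norm_num
    · rw [h, Real.sign_zero, if_neg (by nlinarith)]
      norm_num
    · rw [Real.sign_of_pos h, if_pos (by linarith)]
      norm_num
  set S : Finset (Fin n) := univ.filter (fun i => s < (a i) ^ 2) with hS
  set T : ℝ := ∑ i ∈ S, (a i) ^ 2 with hT
  obtain ⟨i0, hi0⟩ := hex
  have hi0S : i0 ∈ S := by simp [hS, hi0]
  have hTpos : 0 < T :=
    lt_of_lt_of_le (lt_trans hs hi0)
      (Finset.single_le_sum (fun i _ => sq_nonneg (a i)) hi0S)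
  have hsqT : Real.sqrt T ≠ 0 := by
    rw [Real.sqrt_ne_zero']; exact hTpos
  have hsum1 : ∑ j, (a j) ^ 2 * max (Real.sign ((a j) ^ 2 - s)) 0 = T := by
    rw [hT, Finset.sum_filter]
    exact Finset.sum_congr rfl fun i _ => by
      rw [hmax i]; by_cases h : s < (a i) ^ 2 <;> simp [h]
  -- the maximum value equals T - s * card S
  have hval : ∑ i, max ((a i) ^ 2 - s) 0 = T - s * (S.card : ℝ) := by
    have h1 : ∑ i, max ((a i) ^ 2 - s) 0 = ∑ i ∈ S, ((a i) ^ 2 - s) := by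
      rw [hS, Finset.sum_filter]
      refine Finset.sum_congr rfl fun i _ => ?_
      by_cases h : s < (a i) ^ 2
      · rw [if_pos h, max_eq_left (by linarith)]
      · rw [if_neg h, max_eq_right (by push_neg at h; linarith)]
    rw [h1, Finset.sum_sub_distrib, Finset.sum_const, nsmul_eq_mul, hT, mul_comm]
  -- facts about xstar
  have hxnorm : ∑ i, (a i * max (Real.sign ((a i) ^ 2 - s)) 0 /
      Real.sqrt (∑ j, (a j) ^ 2 * max (Real.sign ((a j) ^ 2 - s)) 0)) ^ 2 = 1 := by
    rw [hsum1]
    have h1 : ∀ i, (a i * max (Real.sign ((a i) ^ 2 - s)) 0 / Real.sqrt T) ^ 2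
        = (a i) ^ 2 * max (Real.sign ((a i) ^ 2 - s)) 0 / T := by
      intro i
      rw [hmax i]
      by_cases h : s < (a i) ^ 2 <;>
        simp [h, div_pow, Real.sq_sqrt hTpos.le]
    rw [Finset.sum_congr rfl fun i _ => h1 i, ← Finset.sum_div, hsum1,
      div_self hTpos.ne']
  have hinner : ∑ i, a i * (a i * max (Real.sign ((a i) ^ 2 - s)) 0 /
      Real.sqrt (∑ j, (a j) ^ 2 * max (Real.sign ((a j) ^ 2 - s)) 0)) = Real.sqrt T := by
    rw [hsum1]
    have h1 : ∀ i, a i * (a i * max (Real.sign ((a i) ^ 2 - s)) 0 / Real.sqrt T)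
        = (a i) ^ 2 * max (Real.sign ((a i) ^ 2 - s)) 0 / Real.sqrt T := by
      intro i; ring
    rw [Finset.sum_congr rfl fun i _ => h1 i, ← Finset.sum_div, hsum1, Real.div_sqrt]
  have hsupp : (univ.filter (fun i => (a i * max (Real.sign ((a i) ^ 2 - s)) 0 /
      Real.sqrt (∑ j, (a j) ^ 2 * max (Real.sign ((a j) ^ 2 - s)) 0)) ≠ 0)) = S := by
    rw [hS]
    refine Finset.filter_congr fun i _ => ?_
    rw [hsum1, hmax i]
    by_cases h : s < (a i) ^ 2
    · have ha : a i ≠ 0 := by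
        intro h0; rw [h0] at h; simp at h; linarith
      simp only [h, if_true, mul_one, iff_true]
      exact div_ne_zero ha hsqT
    · simp [h]
  constructor
  · constructor
    · -- membership, witnessed by xstar
      refine ⟨fun i => a i * max (Real.sign ((a i) ^ 2 - s)) 0 /
          Real.sqrt (∑ j, (a j) ^ 2 * max (Real.sign ((a j) ^ 2 - s)) 0), ?_, ?_⟩
      · rw [hxnorm, Real.sqrt_one]
      · rw [hinner, hsupp, Real.sq_sqrt hTpos.le, hval]
    · -- upper bound
      rintro y ⟨x, hx1, rfl⟩
      have hx : ∑ i, (x i) ^ 2 = 1 := Real.sqrt_eq_one.mp hx1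
      set Sx : Finset (Fin n) := univ.filter (fun i => x i ≠ 0) with hSx
      have hxa : ∑ i, a i * x i = ∑ i ∈ Sx, a i * x i := by
        rw [hSx]
        exact (Finset.sum_filter_of_ne fun i _ h => by
          intro h0; apply h; rw [h0, mul_zero]).symm
      have hcs : (∑ i ∈ Sx, a i * x i) ^ 2 ≤ ∑ i ∈ Sx, (a i) ^ 2 := by
        calc (∑ i ∈ Sx, a i * x i) ^ 2
            ≤ (∑ i ∈ Sx, (a i) ^ 2) * ∑ i ∈ Sx, (x i) ^ 2 :=
              Finset.sum_mul_sq_le_sq_mul_sq Sx a x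
          _ ≤ (∑ i ∈ Sx, (a i) ^ 2) * 1 := by
              refine mul_le_mul_of_nonneg_left ?_
                (Finset.sum_nonneg fun i _ => sq_nonneg _)
              rw [← hx]
              exact Finset.sum_le_sum_of_subset_of_nonneg
                (Finset.filter_subset _ _) fun i _ _ => sq_nonneg _
          _ = ∑ i ∈ Sx, (a i) ^ 2 := mul_one _
      have h2 : (∑ i, a i * x i) ^ 2 - s * (Sx.card : ℝ)
          ≤ ∑ i ∈ Sx, ((a i) ^ 2 - s) := by
        rw [hxa, Finset.sum_sub_distrib, Finset.sum_const, nsmul_eq_mul]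
        have : s * (Sx.card : ℝ) = (Sx.card : ℝ) * s := mul_comm _ _
        linarith
      refine h2.trans ?_
      calc ∑ i ∈ Sx, ((a i) ^ 2 - s)
          ≤ ∑ i ∈ Sx, max ((a i) ^ 2 - s) 0 :=
            Finset.sum_le_sum fun i _ => le_max_left _ _
        _ ≤ ∑ i, max ((a i) ^ 2 - s) 0 :=
            Finset.sum_le_sum_of_subset_of_nonneg (Finset.filter_subset _ _)
              fun i _ _ => le_max_right _ _
  · exact ⟨by rw [hxnorm, Real.sqrt_one],
      by rw [hinner, hsupp, Real.sq_sqrt hTpos.le, hval]⟩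
end

section
/- For a ∈ R^n and w ∈ R^n with positive entries, max{⟨a,x⟩ − Σ_i w_i|x_i| : ||x||_2 ≤ 1} = sqrt(Σ_i (|a_i| − w_i)_+²) = ||S_w(a)||_2, and if S_w(a) ≠ 0 the maximizer is x* = S_w(a)/||S_w(a)||_2. -/
open Finset

/-- Maximum of a weighted-`l1`-penalized linear function over the `l2` unit ball equals
`‖S_w(a)‖₂`, attained at the normalized soft-thresholded vector when it is nonzero. -/
theorem max_weighted_l1_penalized_linear (n : ℕ) (a w : Fin n → ℝ)
    (hw : ∀ i, 0 < w i) :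
    IsGreatest {y : ℝ | ∃ x : Fin n → ℝ,
        Real.sqrt (∑ i, (x i) ^ 2) ≤ 1 ∧
        y = (∑ i, a i * x i) - ∑ i, w i * |x i|}
      (Real.sqrt (∑ i, (max (|a i| - w i) 0) ^ 2)) ∧
    Real.sqrt (∑ i, (max (|a i| - w i) 0) ^ 2) =
      Real.sqrt (∑ i, (max (|a i| - w i) 0 * Real.sign (a i)) ^ 2) ∧
    ((fun i => max (|a i| - w i) 0 * Real.sign (a i)) ≠ 0 →
      (letI xstar : Fin n → ℝ := fun i =>
          max (|a i| - w i) 0 * Real.sign (a i) /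
            Real.sqrt (∑ j, (max (|a j| - w j) 0 * Real.sign (a j)) ^ 2)
       Real.sqrt (∑ i, (xstar i) ^ 2) ≤ 1 ∧
         (∑ i, a i * xstar i) - ∑ i, w i * |xstar i| =
           Real.sqrt (∑ i, (max (|a i| - w i) 0) ^ 2))) := by
  set s : Fin n → ℝ := fun i => max (|a i| - w i) 0 with hs
  have hs0 : ∀ i, 0 ≤ s i := fun i => le_max_right _ _
  -- if a i = 0 then s i = 0
  have hsz : ∀ i, a i = 0 → s i = 0 := by
    intro i h
    simp only [hs, h, abs_zero, zero_sub, max_eq_right (neg_nonpos.mpr (hw i).le)]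
  have hsq : ∀ i, (s i * Real.sign (a i)) ^ 2 = (s i) ^ 2 := by
    intro i
    rcases lt_trichotomy (a i) 0 with h | h | h
    · rw [Real.sign_of_neg h]; ring
    · rw [hsz i h]; ring
    · rw [Real.sign_of_pos h]; ring
  have habs : ∀ i, |s i * Real.sign (a i)| = s i := by
    intro i
    rcases lt_trichotomy (a i) 0 with h | h | h
    · rw [Real.sign_of_neg h]; simp [abs_of_nonneg (hs0 i)]
    · rw [hsz i h]; simp
    · rw [Real.sign_of_pos h]; simp [abs_of_nonneg (hs0 i)]
  have hmul : ∀ i, a i * (s i * Real.sign (a i)) = |a i| * s i := by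
    intro i
    rcases lt_trichotomy (a i) 0 with h | h | h
    · rw [Real.sign_of_neg h, abs_of_neg h]; ring
    · simp [h]
    · rw [Real.sign_of_pos h, abs_of_pos h]; ring
  have hkey : ∀ i, |a i| * s i - w i * s i = (s i) ^ 2 := by
    intro i
    rcases le_or_gt (|a i| - w i) 0 with h | h
    · have : s i = 0 := max_eq_right h
      rw [this]; ring
    · have : s i = |a i| - w i := max_eq_left h.le
      rw [this]; ring
  set S : ℝ := Real.sqrt (∑ i, (s i) ^ 2) with hS
  have hSnn : 0 ≤ S := Real.sqrt_nonneg _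
  have hsum_eq : (∑ i, (s i * Real.sign (a i)) ^ 2) = ∑ i, (s i) ^ 2 :=
    Finset.sum_congr rfl fun i _ => hsq i
  have hS2 : Real.sqrt (∑ i, (s i * Real.sign (a i)) ^ 2) = S := by rw [hsum_eq]
  have hsqS : S ^ 2 = ∑ i, (s i) ^ 2 :=
    Real.sq_sqrt (Finset.sum_nonneg fun i _ => sq_nonneg _)
  -- upper bound
  have hub : ∀ y ∈ {y : ℝ | ∃ x : Fin n → ℝ,
        Real.sqrt (∑ i, (x i) ^ 2) ≤ 1 ∧
        y = (∑ i, a i * x i) - ∑ i, w i * |x i|}, y ≤ S := by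
    rintro y ⟨x, hx, rfl⟩
    have h1 : (∑ i, a i * x i) - ∑ i, w i * |x i| ≤ ∑ i, s i * |x i| := by
      rw [← Finset.sum_sub_distrib]
      apply Finset.sum_le_sum
      intro i _
      have h2 : a i * x i ≤ |a i| * |x i| := by
        calc a i * x i ≤ |a i * x i| := le_abs_self _
        _ = |a i| * |x i| := abs_mul _ _
      have : a i * x i - w i * |x i| ≤ (|a i| - w i) * |x i| := by nlinarith
      refine this.trans ?_
      exact mul_le_mul_of_nonneg_right (le_max_left _ _) (abs_nonneg _)
    have hcs : (∑ i, s i * |x i|) ^ 2 ≤ (∑ i, (s i) ^ 2) * ∑ i, |x i| ^ 2 :=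
      Finset.sum_mul_sq_le_sq_mul_sq _ _ _
    have hxs : Real.sqrt (∑ i, |x i| ^ 2) ≤ 1 := by
      simpa [sq_abs] using hx
    have hcs' : (∑ i, s i * |x i|) ≤ S * Real.sqrt (∑ i, |x i| ^ 2) := by
      have hnn : 0 ≤ ∑ i, s i * |x i| :=
        Finset.sum_nonneg fun i _ => mul_nonneg (hs0 i) (abs_nonneg _)
      rw [← Real.sqrt_sq hnn, hS, ← Real.sqrt_mul (Finset.sum_nonneg fun i _ => sq_nonneg _)]
      exact Real.sqrt_le_sqrt hcs
    calc (∑ i, a i * x i) - ∑ i, w i * |x i| ≤ ∑ i, s i * |x i| := h1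
      _ ≤ S * Real.sqrt (∑ i, |x i| ^ 2) := hcs'
      _ ≤ S * 1 := mul_le_mul_of_nonneg_left hxs hSnn
      _ = S := mul_one _
  -- third part
  have hthird : ((fun i => s i * Real.sign (a i)) ≠ 0 →
      (Real.sqrt (∑ i, (s i * Real.sign (a i) /
            Real.sqrt (∑ j, (s j * Real.sign (a j)) ^ 2)) ^ 2) ≤ 1 ∧
         (∑ i, a i * (s i * Real.sign (a i) /
            Real.sqrt (∑ j, (s j * Real.sign (a j)) ^ 2))) -
          ∑ i, w i * |s i * Real.sign (a i) /
            Real.sqrt (∑ j, (s j * Real.sign (a j)) ^ 2)| = S)) := by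
    intro hne
    have hSpos : 0 < S := by
      rcases (Function.ne_iff).mp hne with ⟨i, hi⟩
      have hne2 : s i * Real.sign (a i) ≠ 0 := hi
      have : 0 < (s i * Real.sign (a i)) ^ 2 :=
        lt_of_le_of_ne (sq_nonneg _) (Ne.symm (pow_ne_zero 2 hne2))
      have hlt : 0 < ∑ j, (s j * Real.sign (a j)) ^ 2 :=
        this.trans_le (Finset.single_le_sum
          (f := fun j => (s j * Real.sign (a j)) ^ 2)
          (fun j _ => sq_nonneg _) (Finset.mem_univ i))
      rw [hS, ← hsum_eq]
      exact Real.sqrt_pos.mpr hlt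
    rw [hS2]
    constructor
    · have : (∑ i, (s i * Real.sign (a i) / S) ^ 2) = 1 := by
        have : (∑ i, (s i * Real.sign (a i) / S) ^ 2)
            = (∑ i, (s i) ^ 2) / S ^ 2 := by
          rw [Finset.sum_div]
          exact Finset.sum_congr rfl fun i _ => by rw [div_pow, hsq i]
        rw [this, ← hsqS, div_self (by positivity)]
      rw [this, Real.sqrt_one]
    · have hterm1 : ∀ i, a i * (s i * Real.sign (a i) / S) = |a i| * s i / S := by
        intro i; rw [← mul_div_assoc, hmul i]
      have hterm2 : ∀ i, w i * |s i * Real.sign (a i) / S| = w i * s i / S := by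
        intro i
        rw [abs_div, habs i, abs_of_pos hSpos, mul_div_assoc]
      simp only [hterm1, hterm2]
      rw [← Finset.sum_div, ← Finset.sum_div, div_sub_div_same, ← Finset.sum_sub_distrib]
      rw [Finset.sum_congr rfl fun i _ => hkey i, ← hsqS]
      rw [sq, mul_div_assoc, div_self hSpos.ne', mul_one]
  refine ⟨⟨?_, hub⟩, hS2.symm, hthird⟩
  -- membership
  by_cases hne : (fun i => s i * Real.sign (a i)) = 0
  · have hz : ∀ i, s i = 0 := by
      intro i
      have := congrFun hne i
      simp only [Pi.zero_apply] at this
      rcases mul_eq_zero.mp this with h | h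
      · exact h
      · exact hsz i (Real.sign_eq_zero_iff.mp h)
    refine ⟨0, by simp, ?_⟩
    have : S = 0 := by
      rw [hS]
      simp [hz]
    rw [this]; simp
  · obtain ⟨h1, h2⟩ := hthird hne
    exact ⟨_, h1, h2.symm⟩
end

section
/- For a ∈ R^n and k > 0, strong duality holds: max{⟨a,x⟩ : ||x||_2 ≤ 1, ||x||_1 ≤ k} = min_{λ ≥ 0} { λk + ||S_{λe}(a)||_2 }, where S_{λe}(a)_i = (|a_i| − λ)_+ sgn(a_i); moreover if λ* attains the minimum and S_{λ*e}(a) ≠ 0, then x* = S_{λ*e}(a)/||S_{λ*e}(a)||_2 attains the maximum. -/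
set_option maxHeartbeats 1000000

open Finset

private lemma aux_eps (c d ε₀ : ℝ) (hε₀ : 0 < ε₀)
    (H : ∀ ε : ℝ, 0 < ε → ε ≤ ε₀ → ε * d ≤ c) : 0 ≤ c := by
  by_contra hc
  push_neg at hc
  rcases le_or_gt 0 d with hd | hd
  · have := H ε₀ hε₀ le_rfl
    nlinarith
  · have hcd : 0 < c / (2 * d) := div_pos_of_neg_of_neg (by linarith) (by linarith)
    set ε := min ε₀ (c / (2 * d)) with hε
    have hεpos : 0 < ε := lt_min hε₀ hcd
    have h1 := H ε hεpos (min_le_left _ _)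
    have h2 : ε ≤ c / (2 * d) := min_le_right _ _
    have h5 : c ≤ ε * (2 * d) := (le_div_iff_of_neg (by linarith : 2 * d < 0)).mp h2
    nlinarith

private lemma exists_pos_gap {n : ℕ} (F : Fin n → ℝ) (hF : ∀ i, 0 < F i) :
    ∃ ε : ℝ, 0 < ε ∧ ε ≤ 1 ∧ ∀ i, ε ≤ F i := by
  classical
  have hne : (insert (1:ℝ) (Finset.univ.image F)).Nonempty := ⟨1, Finset.mem_insert_self _ _⟩
  refine ⟨(insert (1:ℝ) (Finset.univ.image F)).min' hne, ?_, ?_, ?_⟩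
  · have := Finset.min'_mem _ hne
    rw [Finset.mem_insert] at this
    rcases this with h | h
    · rw [h]; norm_num
    · obtain ⟨i, _, hi⟩ := Finset.mem_image.mp h
      rw [← hi]; exact hF i
  · exact Finset.min'_le _ _ (Finset.mem_insert_self _ _)
  · intro i
    exact Finset.min'_le _ _ (Finset.mem_insert_of_mem (Finset.mem_image_of_mem F (Finset.mem_univ i)))

private lemma mul_sign_self (a : ℝ) : a * Real.sign a = |a| := by
  rcases lt_trichotomy a 0 with h | h | h
  · rw [Real.sign_of_neg h, abs_of_neg h]; ring
  · simp [h]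
  · rw [Real.sign_of_pos h, abs_of_pos h]; ring

private lemma sq_sign_eq (a lam : ℝ) (hlam : 0 ≤ lam) :
    (max (|a| - lam) 0 * Real.sign a) ^ 2 = (max (|a| - lam) 0) ^ 2 := by
  rcases lt_trichotomy a 0 with h | h | h
  · rw [Real.sign_of_neg h]; ring
  · subst h
    have : max (|(0:ℝ)| - lam) 0 = 0 := by
      rw [abs_zero, zero_sub]
      exact max_eq_right (by linarith)
    rw [this]; ring
  · rw [Real.sign_of_pos h]; ring

private lemma abs_sign_eq (a lam : ℝ) (hlam : 0 ≤ lam) :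
    |max (|a| - lam) 0 * Real.sign a| = max (|a| - lam) 0 := by
  rcases lt_trichotomy a 0 with h | h | h
  · rw [Real.sign_of_neg h, abs_mul]
    simp [abs_of_nonneg (le_max_right (|a| - lam) 0)]
  · subst h
    have : max (|(0:ℝ)| - lam) 0 = 0 := by
      rw [abs_zero, zero_sub]; exact max_eq_right (by linarith)
    rw [this]; simp
  · rw [Real.sign_of_pos h, abs_mul]
    simp [abs_of_nonneg (le_max_right (|a| - lam) 0)]

private lemma mul_sign_eq (a lam : ℝ) (hlam : 0 ≤ lam) :
    a * (max (|a| - lam) 0 * Real.sign a) = (max (|a| - lam) 0) ^ 2 + lam * max (|a| - lam) 0 := by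
  rcases le_total (|a|) lam with h | h
  · rw [max_eq_right (by linarith)]; ring
  · rw [max_eq_left (by linarith)]
    have key : a * Real.sign a = |a| := mul_sign_self a
    calc a * ((|a| - lam) * Real.sign a) = (a * Real.sign a) * (|a| - lam) := by ring
    _ = |a| * (|a| - lam) := by rw [key]
    _ = _ := by ring

private lemma abs_diff_le (a lam : ℝ) (hlam : 0 ≤ lam) :
    |a - max (|a| - lam) 0 * Real.sign a| ≤ lam := by
  rcases lt_trichotomy a 0 with h | h | h
  · rw [Real.sign_of_neg h]
    have habs : |a| = -a := abs_of_neg h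
    rcases le_total (|a|) lam with h2 | h2
    · rw [max_eq_right (by linarith)]
      rw [abs_le]; constructor <;> [skip; skip] <;> simp <;> linarith [abs_le.mp (le_refl |a|)]
    · rw [max_eq_left (by linarith)]
      have : a - (|a| - lam) * (-1) = -lam := by rw [habs]; ring
      rw [this, abs_neg, abs_of_nonneg hlam]
  · subst h
    have : max (|(0:ℝ)| - lam) 0 = 0 := by
      rw [abs_zero, zero_sub]; exact max_eq_right (by linarith)
    rw [this]; simpa using hlam
  · rw [Real.sign_of_pos h]
    have habs : |a| = a := abs_of_pos h
    rcases le_total (|a|) lam with h2 | h2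
    · rw [max_eq_right (by linarith)]
      rw [abs_le]; constructor <;> simp <;> linarith
    · rw [max_eq_left (by linarith)]
      have : a - (|a| - lam) * 1 = lam := by rw [habs]; ring
      rw [this, abs_of_nonneg hlam]

private lemma claims {n : ℕ} (a : Fin n → ℝ) (k : ℝ) (hk : 0 < k) (l : ℝ) (hl : 0 ≤ l)
    (hmin : ∀ μ : ℝ, 0 ≤ μ →
      l * k + Real.sqrt (∑ i, (max (|a i| - l) 0) ^ 2) ≤
      μ * k + Real.sqrt (∑ i, (max (|a i| - μ) 0) ^ 2)) :
    ((0:ℝ) < (∑ i, (max (|a i| - l) 0) ^ 2) →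
      (∑ i, max (|a i| - l) 0) ≤ k * Real.sqrt (∑ i, (max (|a i| - l) 0) ^ 2)) ∧
    (0 < l →
      k * Real.sqrt (∑ i, (max (|a i| - l) 0) ^ 2) ≤ ∑ i, max (|a i| - l) 0) ∧
    (0 < l → (∑ i, (max (|a i| - l) 0) ^ 2) = 0 →
      k ^ 2 ≤ ((Finset.univ.filter (fun i => l ≤ |a i|)).card : ℝ)) := by
  classical
  set h := ∑ i, (max (|a i| - l) 0) ^ 2 with hhdef
  set L := ∑ i, max (|a i| - l) 0 with hLdef
  set sh := Real.sqrt h with hshdef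
  have hnonneg : 0 ≤ h := Finset.sum_nonneg fun i _ => sq_nonneg _
  have hLnonneg : 0 ≤ L := Finset.sum_nonneg fun i _ => le_max_right _ _
  obtain ⟨ε₁, hε₁pos, hε₁le1, hε₁⟩ := exists_pos_gap
    (fun i => if l < |a i| then |a i| - l else if |a i| < l then l - |a i| else 1)
    (fun i => by split_ifs with h1 h2
                 · linarith
                 · linarith
                 · norm_num)
  have gap1 : ∀ i, l < |a i| → ε₁ ≤ |a i| - l := fun i hi => by
    have := hε₁ i; rwa [if_pos hi] at this
  have gap2 : ∀ i, |a i| < l → ε₁ ≤ l - |a i| := fun i hi => by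
    have := hε₁ i; rwa [if_neg (by linarith), if_pos hi] at this
  set s₁ := ((Finset.univ.filter (fun i => l < |a i|)).card : ℝ) with hs₁def
  set s₂ := ((Finset.univ.filter (fun i => l ≤ |a i|)).card : ℝ) with hs₂def
  have hs₂nonneg : (0:ℝ) ≤ s₂ := Nat.cast_nonneg _
  have hplus : ∀ ε : ℝ, 0 < ε → ε ≤ ε₁ →
      (∑ i, (max (|a i| - (l + ε)) 0) ^ 2) = h - 2*ε*L + ε^2 * s₁ := by
    intro ε hε hεle
    have step : ∀ i ∈ Finset.univ, (max (|a i| - (l + ε)) 0) ^ 2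
        = (max (|a i| - l) 0) ^ 2 - 2*ε*(max (|a i| - l) 0)
          + ε^2 * (if l < |a i| then (1:ℝ) else 0) := by
      intro i _
      by_cases hi : l < |a i|
      · have h1 : ε ≤ |a i| - l := le_trans hεle (gap1 i hi)
        rw [if_pos hi, max_eq_left (by linarith), max_eq_left (by linarith)]
        ring
      · push_neg at hi
        rw [if_neg (not_lt.mpr hi), max_eq_right (by linarith), max_eq_right (by linarith)]
        ring
    rw [Finset.sum_congr rfl step, Finset.sum_add_distrib, Finset.sum_sub_distrib,
      ← Finset.mul_sum, ← Finset.mul_sum, Finset.sum_boole]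
  have hminus : ∀ ε : ℝ, 0 < ε → ε ≤ ε₁ →
      (∑ i, (max (|a i| - (l - ε)) 0) ^ 2) = h + 2*ε*L + ε^2 * s₂ := by
    intro ε hε hεle
    have step : ∀ i ∈ Finset.univ, (max (|a i| - (l - ε)) 0) ^ 2
        = (max (|a i| - l) 0) ^ 2 + 2*ε*(max (|a i| - l) 0)
          + ε^2 * (if l ≤ |a i| then (1:ℝ) else 0) := by
      intro i _
      by_cases hi : l ≤ |a i|
      · rw [if_pos hi, max_eq_left (by linarith), max_eq_left (by linarith)]
        ring
      · push_neg at hi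
        have h1 : ε ≤ l - |a i| := le_trans hεle (gap2 i hi)
        rw [if_neg (not_le.mpr hi), max_eq_right (by linarith), max_eq_right (by linarith)]
        ring
    rw [Finset.sum_congr rfl step, Finset.sum_add_distrib, Finset.sum_add_distrib,
      ← Finset.mul_sum, ← Finset.mul_sum, Finset.sum_boole]
  have keyB : 0 < l → ∀ ε : ℝ, 0 < ε → ε ≤ min ε₁ l → ε * (k^2 - s₂) ≤ 2*(L - k*sh) := by
    intro hlpos ε hε hεle
    have hε1 : ε ≤ ε₁ := le_trans hεle (min_le_left _ _)
    have hεl : ε ≤ l := le_trans hεle (min_le_right _ _)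
    have hmin' := hmin (l - ε) (by linarith)
    rw [hminus ε hε hε1] at hmin'
    have hB0 : (0:ℝ) ≤ h + 2*ε*L + ε^2*s₂ := by positivity
    have h1 : sh + ε*k ≤ Real.sqrt (h + 2*ε*L + ε^2*s₂) := by nlinarith [hmin']
    have h2 : (sh + ε*k)^2 ≤ h + 2*ε*L + ε^2*s₂ := by
      have h3 : (0:ℝ) ≤ sh + ε*k := by positivity
      calc (sh + ε*k)^2 ≤ (Real.sqrt (h + 2*ε*L + ε^2*s₂))^2 := pow_le_pow_left₀ h3 h1 2
      _ = h + 2*ε*L + ε^2*s₂ := Real.sq_sqrt hB0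
    have hsh2 : sh^2 = h := Real.sq_sqrt hnonneg
    have hexp : (sh + ε*k)^2 = h + 2*ε*k*sh + ε^2*k^2 := by rw [← hsh2]; ring
    rw [hexp] at h2
    have h4 : ε * (2*k*sh + ε*k^2) ≤ ε * (2*L + ε*s₂) := by ring_nf; ring_nf at h2; linarith
    have h5 := le_of_mul_le_mul_left h4 hε
    ring_nf; ring_nf at h5; linarith
  have keyA : 0 < h → L ≤ k * sh := by
    intro hpos
    have hshpos : 0 < sh := Real.sqrt_pos.mpr hpos
    have hεA : 0 < min ε₁ (sh / (2*k)) := lt_min hε₁pos (by positivity)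
    have key : ∀ ε : ℝ, 0 < ε → ε ≤ min ε₁ (sh/(2*k)) → ε * (k^2 - s₁) ≤ 2*(k*sh - L) := by
      intro ε hε hεle
      have hε1 : ε ≤ ε₁ := le_trans hεle (min_le_left _ _)
      have hε2 : ε * k ≤ sh / 2 := by
        have hle : ε ≤ sh/(2*k) := le_trans hεle (min_le_right _ _)
        have := mul_le_mul_of_nonneg_right hle hk.le
        calc ε * k ≤ sh/(2*k) * k := this
        _ = sh / 2 := by field_simp
      have hmin' := hmin (l+ε) (by linarith)
      rw [hplus ε hε hε1] at hmin'
      have hA0 : (0:ℝ) ≤ h - 2*ε*L + ε^2*s₁ := by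
        rw [← hplus ε hε hε1]; exact Finset.sum_nonneg fun i _ => sq_nonneg _
      have h1 : sh - ε*k ≤ Real.sqrt (h - 2*ε*L + ε^2*s₁) := by nlinarith [hmin']
      have h2 : (sh - ε*k)^2 ≤ h - 2*ε*L + ε^2*s₁ := by
        have h3 : (0:ℝ) ≤ sh - ε*k := by linarith
        calc (sh - ε*k)^2 ≤ (Real.sqrt (h - 2*ε*L + ε^2*s₁))^2 := pow_le_pow_left₀ h3 h1 2
        _ = h - 2*ε*L + ε^2*s₁ := Real.sq_sqrt hA0
      have hsh2 : sh^2 = h := Real.sq_sqrt hnonneg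
      have hexp : (sh - ε*k)^2 = h - 2*ε*k*sh + ε^2*k^2 := by rw [← hsh2]; ring
      rw [hexp] at h2
      have h4 : ε * (ε*k^2 - 2*k*sh) ≤ ε * (ε*s₁ - 2*L) := by ring_nf; ring_nf at h2; linarith
      have h5 := le_of_mul_le_mul_left h4 hε
      ring_nf; ring_nf at h5; linarith
    have := aux_eps (2*(k*sh - L)) (k^2 - s₁) _ hεA key
    linarith
  refine ⟨keyA, ?_, ?_⟩
  · intro hlpos
    have hεB : 0 < min ε₁ l := lt_min hε₁pos hlpos
    have := aux_eps (2*(L - k*sh)) (k^2 - s₂) _ hεB (keyB hlpos)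
    linarith
  · intro hlpos hzero
    have hL0 : L = 0 := by
      rw [hLdef]
      apply Finset.sum_eq_zero
      intro i _
      have := (Finset.sum_eq_zero_iff_of_nonneg (fun i _ => sq_nonneg (max (|a i| - l) 0))).mp
        hzero i (Finset.mem_univ i)
      exact pow_eq_zero_iff (n := 2) (by norm_num) |>.mp this
    have hsh0 : sh = 0 := by rw [hshdef, hzero, Real.sqrt_zero]
    have hεB : 0 < min ε₁ l := lt_min hε₁pos hlpos
    have := keyB hlpos (min ε₁ l) hεB le_rfl
    rw [hL0, hsh0] at this
    nlinarith [this, hεB]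

private lemma weak_duality {n : ℕ} (a : Fin n → ℝ) (k lam : ℝ) (hlam : 0 ≤ lam)
    (x : Fin n → ℝ) (hx2 : Real.sqrt (∑ i, (x i)^2) ≤ 1) (hx1 : (∑ i, |x i|) ≤ k) :
    (∑ i, a i * x i) ≤ lam * k + Real.sqrt (∑ i, (max (|a i| - lam) 0)^2) := by
  classical
  set s : Fin n → ℝ := fun i => max (|a i| - lam) 0 * Real.sign (a i) with hs
  have step1 : ∀ i ∈ Finset.univ, a i * x i ≤ lam * |x i| + s i * x i := by
    intro i _
    have hd : |a i - s i| ≤ lam := abs_diff_le (a i) lam hlam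
    have h1 : (a i - s i) * x i ≤ lam * |x i| :=
      calc (a i - s i) * x i ≤ |(a i - s i) * x i| := le_abs_self _
      _ = |a i - s i| * |x i| := abs_mul _ _
      _ ≤ lam * |x i| := mul_le_mul_of_nonneg_right hd (abs_nonneg _)
    have h2 : (a i - s i) * x i = a i * x i - s i * x i := by ring
    linarith
  have hx2nn : (0:ℝ) ≤ ∑ i, (x i)^2 := Finset.sum_nonneg fun i _ => sq_nonneg _
  have hsnn : (0:ℝ) ≤ ∑ i, (s i)^2 := Finset.sum_nonneg fun i _ => sq_nonneg _
  have hCSsq : (∑ i, s i * x i)^2 ≤ (∑ i, (s i)^2) * (∑ i, (x i)^2) :=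
    Finset.sum_mul_sq_le_sq_mul_sq _ _ _
  have hCS : (∑ i, s i * x i) ≤ Real.sqrt (∑ i, (s i)^2) * Real.sqrt (∑ i, (x i)^2) := by
    calc (∑ i, s i * x i) ≤ |∑ i, s i * x i| := le_abs_self _
    _ = Real.sqrt ((∑ i, s i * x i)^2) := (Real.sqrt_sq_eq_abs _).symm
    _ ≤ Real.sqrt ((∑ i, (s i)^2) * (∑ i, (x i)^2)) := Real.sqrt_le_sqrt hCSsq
    _ = _ := Real.sqrt_mul hsnn _
  have hbr : (∑ i, (s i)^2) = ∑ i, (max (|a i| - lam) 0)^2 :=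
    Finset.sum_congr rfl fun i _ => sq_sign_eq (a i) lam hlam
  have h3 : (∑ i, s i * x i) ≤ Real.sqrt (∑ i, (max (|a i| - lam) 0)^2) := by
    calc (∑ i, s i * x i) ≤ Real.sqrt (∑ i, (s i)^2) * Real.sqrt (∑ i, (x i)^2) := hCS
    _ ≤ Real.sqrt (∑ i, (s i)^2) * 1 := mul_le_mul_of_nonneg_left hx2 (Real.sqrt_nonneg _)
    _ = Real.sqrt (∑ i, (s i)^2) := mul_one _
    _ = _ := by rw [hbr]
  calc (∑ i, a i * x i) ≤ ∑ i, (lam * |x i| + s i * x i) := Finset.sum_le_sum step1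
  _ = lam * (∑ i, |x i|) + ∑ i, s i * x i := by
      rw [Finset.sum_add_distrib, Finset.mul_sum]
  _ ≤ lam * k + Real.sqrt (∑ i, (max (|a i| - lam) 0)^2) :=
      add_le_add (mul_le_mul_of_nonneg_left hx1 hlam) h3

private lemma construct {n : ℕ} (a : Fin n → ℝ) (k l : ℝ) (hl : 0 ≤ l) (hk : 0 < k)
    (hpos : (0:ℝ) < (∑ i, (max (|a i| - l) 0) ^ 2))
    (hA : (∑ i, max (|a i| - l) 0) ≤ k * Real.sqrt (∑ i, (max (|a i| - l) 0) ^ 2))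
    (hB : l * (∑ i, max (|a i| - l) 0) = l * (k * Real.sqrt (∑ i, (max (|a i| - l) 0) ^ 2))) :
    Real.sqrt (∑ i, (max (|a i| - l) 0 * Real.sign (a i) /
        Real.sqrt (∑ j, (max (|a j| - l) 0 * Real.sign (a j)) ^ 2)) ^ 2) ≤ 1 ∧
    (∑ i, |max (|a i| - l) 0 * Real.sign (a i) /
        Real.sqrt (∑ j, (max (|a j| - l) 0 * Real.sign (a j)) ^ 2)|) ≤ k ∧
    (∑ i, a i * (max (|a i| - l) 0 * Real.sign (a i) /
        Real.sqrt (∑ j, (max (|a j| - l) 0 * Real.sign (a j)) ^ 2))) =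
      l * k + Real.sqrt (∑ i, (max (|a i| - l) 0 * Real.sign (a i)) ^ 2) := by
  classical
  have hbr : (∑ j, (max (|a j| - l) 0 * Real.sign (a j)) ^ 2)
      = ∑ j, (max (|a j| - l) 0) ^ 2 :=
    Finset.sum_congr rfl fun j _ => sq_sign_eq (a j) l hl
  set h := ∑ i, (max (|a i| - l) 0) ^ 2 with hhdef
  set r := Real.sqrt h with hrdef
  have hrpos : 0 < r := Real.sqrt_pos.mpr hpos
  have hrr : r * r = h := Real.mul_self_sqrt (le_of_lt hpos)
  rw [hbr]
  refine ⟨?_, ?_, ?_⟩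
  · have hsum : (∑ i, (max (|a i| - l) 0 * Real.sign (a i) / r) ^ 2) = 1 := by
      have step : ∀ i ∈ Finset.univ, (max (|a i| - l) 0 * Real.sign (a i) / r) ^ 2
          = (max (|a i| - l) 0) ^ 2 / h := by
        intro i _
        rw [div_pow, sq_sign_eq (a i) l hl]
        congr 1
        rw [sq, hrr]
      rw [Finset.sum_congr rfl step, ← Finset.sum_div, div_self (ne_of_gt hpos)]
    rw [hsum, Real.sqrt_one]
  · have hsum : (∑ i, |max (|a i| - l) 0 * Real.sign (a i) / r|)
        = (∑ i, max (|a i| - l) 0) / r := by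
      have step : ∀ i ∈ Finset.univ, |max (|a i| - l) 0 * Real.sign (a i) / r|
          = max (|a i| - l) 0 / r := by
        intro i _
        rw [abs_div, abs_sign_eq (a i) l hl, abs_of_pos hrpos]
      rw [Finset.sum_congr rfl step, ← Finset.sum_div]
    rw [hsum, div_le_iff₀ hrpos]
    calc (∑ i, max (|a i| - l) 0) ≤ k * r := hA
    _ = k * r := rfl
  · have hsum : (∑ i, a i * (max (|a i| - l) 0 * Real.sign (a i) / r))
        = (h + l * (∑ i, max (|a i| - l) 0)) / r := by
      have step : ∀ i ∈ Finset.univ, a i * (max (|a i| - l) 0 * Real.sign (a i) / r)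
          = ((max (|a i| - l) 0) ^ 2 + l * max (|a i| - l) 0) / r := by
        intro i _
        rw [← mul_div_assoc, mul_sign_eq (a i) l hl]
      rw [Finset.sum_congr rfl step, ← Finset.sum_div, Finset.sum_add_distrib,
        ← Finset.mul_sum, ← hhdef]
    rw [hsum, ← hrdef, div_eq_iff (ne_of_gt hrpos)]
    nlinarith [hB, hrr]

/-- Strong duality for maximizing a linear function over the intersection of the `l2`
unit ball and an `l1` ball, with dual given by soft thresholding. -/
theorem l1_l2_constrained_strong_duality (n : ℕ) (a : Fin n → ℝ) (k : ℝ) (hk : 0 < k) :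
    ∃ M : ℝ,
      IsGreatest {y : ℝ | ∃ x : Fin n → ℝ,
          Real.sqrt (∑ i, (x i) ^ 2) ≤ 1 ∧ (∑ i, |x i|) ≤ k ∧
          y = ∑ i, a i * x i} M ∧
      IsLeast {y : ℝ | ∃ lam : ℝ, 0 ≤ lam ∧
          y = lam * k +
            Real.sqrt (∑ i, (max (|a i| - lam) 0 * Real.sign (a i)) ^ 2)} M ∧
      ∀ lam : ℝ, 0 ≤ lam →
        lam * k + Real.sqrt (∑ i, (max (|a i| - lam) 0 * Real.sign (a i)) ^ 2) = M →
        (fun i => max (|a i| - lam) 0 * Real.sign (a i)) ≠ 0 →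
        (letI xstar : Fin n → ℝ := fun i =>
            max (|a i| - lam) 0 * Real.sign (a i) /
              Real.sqrt (∑ j, (max (|a j| - lam) 0 * Real.sign (a j)) ^ 2)
         Real.sqrt (∑ i, (xstar i) ^ 2) ≤ 1 ∧ (∑ i, |xstar i|) ≤ k ∧
           (∑ i, a i * xstar i) = M) := by
  classical
  have bridge : ∀ lam : ℝ, 0 ≤ lam →
      (∑ i, (max (|a i| - lam) 0 * Real.sign (a i)) ^ 2)
        = ∑ i, (max (|a i| - lam) 0) ^ 2 :=
    fun lam hlam => Finset.sum_congr rfl fun i _ => sq_sign_eq (a i) lam hlam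
  set g : ℝ → ℝ := fun μ => μ * k + Real.sqrt (∑ i, (max (|a i| - μ) 0) ^ 2) with hgdef
  have hgcont : Continuous g := by
    apply Continuous.add (continuous_id.mul continuous_const)
    apply Real.continuous_sqrt.comp
    apply continuous_finset_sum
    intro i _
    exact ((continuous_const.sub continuous_id).max continuous_const).pow 2
  have hg0 : 0 ≤ g 0 := by
    simp only [hgdef, zero_mul, zero_add]
    exact Real.sqrt_nonneg _
  set B := g 0 / k + 1 with hBdef
  have hBpos : 0 < B := add_pos_of_nonneg_of_pos (div_nonneg hg0 hk.le) one_pos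
  obtain ⟨l, hlmem, hlmin⟩ := (isCompact_Icc : IsCompact (Set.Icc (0:ℝ) B)).exists_isMinOn
    (Set.nonempty_Icc.mpr hBpos.le) hgcont.continuousOn
  obtain ⟨hl0, hlB⟩ := hlmem
  have hminglob : ∀ μ : ℝ, 0 ≤ μ → g l ≤ g μ := by
    intro μ hμ
    rcases le_or_gt μ B with hc | hc
    · exact isMinOn_iff.mp hlmin μ ⟨hμ, hc⟩
    · have h1 : g l ≤ g 0 := isMinOn_iff.mp hlmin 0 ⟨le_rfl, hBpos.le⟩
      have h2 : μ * k ≤ g μ := by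
        simp only [hgdef]; exact le_add_of_nonneg_right (Real.sqrt_nonneg _)
      have h3 : B * k = g 0 + k := by rw [hBdef]; field_simp
      nlinarith [hc, hk]
  simp only [hgdef] at hminglob
  obtain ⟨cA, cB, cC⟩ := claims a k hk l hl0 hminglob
  set M := l * k + Real.sqrt (∑ i, (max (|a i| - l) 0) ^ 2) with hMdef
  have hBmulgen : ∀ lam : ℝ, 0 ≤ lam →
      ((∑ i, max (|a i| - lam) 0) ≤ k * Real.sqrt (∑ i, (max (|a i| - lam) 0) ^ 2)) →
      (0 < lam → k * Real.sqrt (∑ i, (max (|a i| - lam) 0) ^ 2) ≤ ∑ i, max (|a i| - lam) 0) →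
      lam * (∑ i, max (|a i| - lam) 0)
        = lam * (k * Real.sqrt (∑ i, (max (|a i| - lam) 0) ^ 2)) := by
    intro lam hlam hA hB
    rcases eq_or_lt_of_le hlam with h0 | h0
    · rw [← h0, zero_mul, zero_mul]
    · rw [le_antisymm hA (hB h0)]
  refine ⟨M, ⟨?_, ?_⟩, ⟨?_, ?_⟩, ?_⟩
  · -- primal membership
    by_cases hpos : (0:ℝ) < ∑ i, (max (|a i| - l) 0) ^ 2
    · obtain ⟨c1, c2, c3⟩ := construct a k l hl0 hk hpos (cA hpos)
        (hBmulgen l hl0 (cA hpos) cB)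
      refine ⟨_, c1, c2, ?_⟩
      rw [c3, bridge l hl0, ← hMdef]
    · have hzero : (∑ i, (max (|a i| - l) 0) ^ 2) = 0 :=
        le_antisymm (le_of_not_gt hpos) (Finset.sum_nonneg fun i _ => sq_nonneg _)
      have hmax0 : ∀ i, max (|a i| - l) 0 = 0 := by
        intro i
        have := (Finset.sum_eq_zero_iff_of_nonneg
          (fun i _ => sq_nonneg (max (|a i| - l) 0))).mp hzero i (Finset.mem_univ i)
        exact pow_eq_zero_iff (n := 2) (by norm_num) |>.mp this
      have habs_le : ∀ i, |a i| ≤ l := by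
        intro i
        have := hmax0 i
        by_contra hcon
        push_neg at hcon
        rw [max_eq_left (by linarith)] at this
        linarith
      rcases eq_or_lt_of_le hl0 with h0 | h0
      · refine ⟨fun _ => 0, ?_, ?_, ?_⟩
        · simp
        · simp [hk.le]
        · rw [hMdef, hzero, Real.sqrt_zero, ← h0]
          simp
      · have hC := cC h0 hzero
        set N := (Finset.univ.filter (fun i => l ≤ |a i|)).card with hNdef
        have hNpos : (0:ℝ) < (N : ℝ) := lt_of_lt_of_le (by positivity) hC
        have hNne : (N:ℝ) ≠ 0 := ne_of_gt hNpos
        have habs_eq : ∀ i, l ≤ |a i| → |a i| = l := fun i hi => le_antisymm (habs_le i) hi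
        have hane : ∀ i, l ≤ |a i| → a i ≠ 0 := by
          intro i hi hcon
          rw [hcon, abs_zero] at hi
          linarith
        have hsign : ∀ i, l ≤ |a i| → |Real.sign (a i)| = 1 := by
          intro i hi
          rcases lt_trichotomy (a i) 0 with h | h | h
          · rw [Real.sign_of_neg h]; norm_num
          · exact absurd h (hane i hi)
          · rw [Real.sign_of_pos h]; norm_num
        refine ⟨fun i => if l ≤ |a i| then Real.sign (a i) * (k / N) else 0, ?_, ?_, ?_⟩
        · have hsum : (∑ i, (if l ≤ |a i| then Real.sign (a i) * (k / N) else 0) ^ 2)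
              = (k^2 / N) := by
            have step : ∀ i ∈ Finset.univ,
                (if l ≤ |a i| then Real.sign (a i) * (k / N) else 0) ^ 2
                = if l ≤ |a i| then (k / N)^2 else 0 := by
              intro i _
              by_cases hi : l ≤ |a i|
              · rw [if_pos hi, if_pos hi, mul_pow]
                have : (Real.sign (a i))^2 = 1 := by
                  rw [sq_abs (Real.sign (a i)) |>.symm, hsign i hi]; norm_num
                rw [this, one_mul]
              · rw [if_neg hi, if_neg hi]
                ring
            rw [Finset.sum_congr rfl step, ← Finset.sum_filter]
            rw [Finset.sum_const, ← hNdef, nsmul_eq_mul]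
            field_simp
          rw [hsum]
          apply Real.sqrt_le_one.mpr
          rw [div_le_one hNpos]
          exact hC
        · have hsum : (∑ i, |if l ≤ |a i| then Real.sign (a i) * (k / N) else 0|) = k := by
            have step : ∀ i ∈ Finset.univ,
                |if l ≤ |a i| then Real.sign (a i) * (k / N) else 0|
                = if l ≤ |a i| then (k / N) else 0 := by
              intro i _
              by_cases hi : l ≤ |a i|
              · rw [if_pos hi, if_pos hi, abs_mul, hsign i hi, one_mul,
                  abs_of_pos (div_pos hk hNpos)]
              · rw [if_neg hi, if_neg hi, abs_zero]
            rw [Finset.sum_congr rfl step, ← Finset.sum_filter]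
            rw [Finset.sum_const, ← hNdef, nsmul_eq_mul]
            field_simp
          rw [hsum]
        · have hsum : (∑ i, a i * (if l ≤ |a i| then Real.sign (a i) * (k / N) else 0))
              = l * k := by
            have step : ∀ i ∈ Finset.univ,
                a i * (if l ≤ |a i| then Real.sign (a i) * (k / N) else 0)
                = if l ≤ |a i| then l * (k / N) else 0 := by
              intro i _
              by_cases hi : l ≤ |a i|
              · rw [if_pos hi, if_pos hi, ← mul_assoc, mul_sign_self (a i), habs_eq i hi]
              · rw [if_neg hi, if_neg hi, mul_zero]
            rw [Finset.sum_congr rfl step, ← Finset.sum_filter]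
            rw [Finset.sum_const, ← hNdef, nsmul_eq_mul]
            field_simp
          rw [hsum, hMdef, hzero, Real.sqrt_zero, add_zero]
  · -- primal upper bound
    rintro y ⟨x, hx2, hx1, rfl⟩
    rw [hMdef]
    exact weak_duality a k l hl0 x hx2 hx1
  · -- dual membership
    refine ⟨l, hl0, ?_⟩
    rw [bridge l hl0]
  · -- dual lower bound
    rintro y ⟨lam, hlam, rfl⟩
    rw [bridge lam hlam, hMdef]
    exact hminglob lam hlam
  · -- attainment
    intro lam hlam heq hne
    have hminlam : ∀ μ : ℝ, 0 ≤ μ →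
        lam * k + Real.sqrt (∑ i, (max (|a i| - lam) 0) ^ 2) ≤
        μ * k + Real.sqrt (∑ i, (max (|a i| - μ) 0) ^ 2) := by
      intro μ hμ
      have h1 : lam * k + Real.sqrt (∑ i, (max (|a i| - lam) 0) ^ 2) = M := by
        rw [← bridge lam hlam]; exact heq
      rw [h1, hMdef]
      exact hminglob μ hμ
    obtain ⟨cA', cB', _⟩ := claims a k hk lam hlam hminlam
    obtain ⟨i0, hi0⟩ := Function.ne_iff.mp hne
    have hmaxi : max (|a i0| - lam) 0 ≠ 0 := left_ne_zero_of_mul hi0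
    have hpos : (0:ℝ) < ∑ i, (max (|a i| - lam) 0) ^ 2 := by
      have h1 : 0 < (max (|a i0| - lam) 0) ^ 2 :=
        pow_pos (lt_of_le_of_ne (le_max_right _ _) (Ne.symm hmaxi)) 2
      exact lt_of_lt_of_le h1 (Finset.single_le_sum
        (f := fun j => (max (|a j| - lam) 0) ^ 2) (fun j _ => sq_nonneg _) (Finset.mem_univ i0))
    obtain ⟨c1, c2, c3⟩ := construct a k lam hlam hk hpos (cA' hpos)
      (hBmulgen lam hlam (cA' hpos) cB')
    exact ⟨c1, c2, by rw [c3]; exact heq⟩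
end
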